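/- Let (A, E) be an exact category. If the class of admissible morphisms is closed under addition (the sum of two admissible morphisms with the same source and target is admissible), then A is abelian and E is the class of all kernel-cokernel pairs. -/

import Mathlib

open CategoryTheory CategoryTheory.Limits

universe v u

variable {C : Type u} [Category.{v} C] [Preadditive C]

/-- `(i, d)` is a kernel-cokernel pair. -/
structure IsKernelCokernelPair {A B X : C} (i : A ⟶ B) (d : B ⟶ X) : Prop where
  w : i ≫ d = 0
  isKernel : Nonempty (IsLimit (KernelFork.ofι i w))
  isCokernel : Nonempty (IsColimit (CokernelCofork.ofπ d w))

/-- A Quillen exact structure on an additive category. -/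
structure ExactStructure (C : Type u) [Category.{v} C] [Preadditive C] :
    Type (max u v) where
  E : ∀ ⦃A B X : C⦄, (A ⟶ B) → (B ⟶ X) → Prop
  pair : ∀ ⦃A B X : C⦄ {i : A ⟶ B} {d : B ⟶ X}, E i d → IsKernelCokernelPair i d
  iso_closed : ∀ ⦃A B X A' B' X' : C⦄ {i : A ⟶ B} {d : B ⟶ X} {i' : A' ⟶ B'} {d' : B' ⟶ X'}
      (eA : A ≅ A') (eB : B ≅ B') (eX : X ≅ X'),
      E i d → i ≫ eB.hom = eA.hom ≫ i' → d ≫ eX.hom = eB.hom ≫ d' → E i' d'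
  admMono_id : ∀ A : C, ∃ (X : C) (d : A ⟶ X), E (𝟙 A) d
  admEpi_id : ∀ A : C, ∃ (X : C) (i : X ⟶ A), E i (𝟙 A)
  admMono_comp : ∀ ⦃A B D : C⦄ (f : A ⟶ B) (g : B ⟶ D),
      (∃ (X : C) (d : B ⟶ X), E f d) → (∃ (X : C) (d : D ⟶ X), E g d) →
      ∃ (X : C) (d : D ⟶ X), E (f ≫ g) d
  admEpi_comp : ∀ ⦃A B D : C⦄ (f : A ⟶ B) (g : B ⟶ D),
      (∃ (X : C) (i : X ⟶ A), E i f) → (∃ (X : C) (i : X ⟶ B), E i g) →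
      ∃ (X : C) (i : X ⟶ A), E i (f ≫ g)
  pushout_admMono : ∀ ⦃A B Z : C⦄ (i : A ⟶ B) (f : A ⟶ Z),
      (∃ (X : C) (d : B ⟶ X), E i d) →
      ∃ (D : C) (g : B ⟶ D) (j : Z ⟶ D) (w : i ≫ g = f ≫ j),
        Nonempty (IsColimit (PushoutCocone.mk g j w)) ∧ ∃ (X : C) (d : D ⟶ X), E j d
  pullback_admEpi : ∀ ⦃B D Z : C⦄ (h : B ⟶ D) (g : Z ⟶ D),
      (∃ (X : C) (i : X ⟶ B), E i h) →
      ∃ (A : C) (f : A ⟶ B) (k : A ⟶ Z) (w : f ≫ h = k ≫ g),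
        Nonempty (IsLimit (PullbackCone.mk f k w)) ∧ ∃ (X : C) (i : X ⟶ A), E i k

namespace ExactStructure

variable (Ex : ExactStructure C)

/-- `i` is an admissible monic. -/
def AdmMono {A B : C} (i : A ⟶ B) : Prop := ∃ (X : C) (d : B ⟶ X), Ex.E i d

/-- `d` is an admissible epic. -/
def AdmEpi {B X : C} (d : B ⟶ X) : Prop := ∃ (A : C) (i : A ⟶ B), Ex.E i d

/-- `f` is admissible: it factors as an admissible epic followed by an admissible monic. -/
def Admissible {A B : C} (f : A ⟶ B) : Prop :=
  ∃ (Z : C) (e : A ⟶ Z) (m : Z ⟶ B), Ex.AdmEpi e ∧ Ex.AdmMono m ∧ e ≫ m = f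

/-- `E` consists of all kernel-cokernel pairs. -/
def IsMaximalAll : Prop :=
  ∀ ⦃A B X : C⦄ (i : A ⟶ B) (d : B ⟶ X), IsKernelCokernelPair i d → Ex.E i d

/-- `S` is `E`-simple. -/
def ESimple (S : C) : Prop :=
  ¬ IsZero S ∧ ∀ ⦃A : C⦄ (i : A ⟶ S), Ex.AdmMono i → IsZero A ∨ IsIso i

end ExactStructure

/-- `A` is abelian: it has finite products, kernels, cokernels, every mono is normal
and every epi is normal. -/
def IsAbelianCat (C : Type u) [Category.{v} C] [Preadditive C] : Prop :=
  HasFiniteProducts C ∧ HasKernels C ∧ HasCokernels C ∧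
  (∀ ⦃X Y : C⦄ (f : X ⟶ Y), Mono f → Nonempty (NormalMono f)) ∧
  (∀ ⦃X Y : C⦄ (f : X ⟶ Y), Epi f → Nonempty (NormalEpi f))

/-- An admissible (`E`-)subobject of `X`. -/
structure ESub (Ex : ExactStructure C) (X : C) where
  obj : C
  ι : obj ⟶ X
  adm : Ex.AdmMono ι

/-- The order on `E`-subobjects of `X`. -/
def ESubLe (Ex : ExactStructure C) {X : C} (s t : ESub Ex X) : Prop :=
  ∃ h : s.obj ⟶ t.obj, Ex.AdmMono h ∧ h ≫ t.ι = s.ι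

/-- Two `E`-subobjects are isomorphic as subobjects. -/
def ESubEquiv (Ex : ExactStructure C) {X : C} (s t : ESub Ex X) : Prop :=
  ESubLe Ex s t ∧ ESubLe Ex t s

/-- The admissible intersection axiom (AI). -/
def AIAxiom (Ex : ExactStructure C) : Prop :=
  ∀ ⦃B Z D : C⦄ (g : B ⟶ D) (j : Z ⟶ D), Ex.AdmMono g → Ex.AdmMono j →
    ∃ (A : C) (f : A ⟶ B) (f' : A ⟶ Z) (w : f ≫ g = f' ≫ j),
      Ex.AdmMono f ∧ Ex.AdmMono f' ∧ Nonempty (IsLimit (PullbackCone.mk f f' w))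

/-- The admissible sum axiom (AS): for every pullback square of admissible monics,
the induced map from the pushout to the common codomain is an admissible monic. -/
def ASAxiom (Ex : ExactStructure C) : Prop :=
  ∀ ⦃A B Z D : C⦄ (f : A ⟶ B) (f' : A ⟶ Z) (g : B ⟶ D) (j : Z ⟶ D) (w : f ≫ g = f' ≫ j),
    Ex.AdmMono f → Ex.AdmMono f' → Ex.AdmMono g → Ex.AdmMono j →
    IsLimit (PullbackCone.mk f f' w) →
    ∀ ⦃P : C⦄ (l : B ⟶ P) (k : Z ⟶ P) (w' : f ≫ l = f' ≫ k),
      IsColimit (PushoutCocone.mk l k w') →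
      ∀ u : P ⟶ D, l ≫ u = g → k ≫ u = j → Ex.AdmMono u

/-- An AIS-category: an AI-category satisfying the admissible sum axiom. -/
def AISCat (Ex : ExactStructure C) : Prop := AIAxiom Ex ∧ ASAxiom Ex

/-- `f` is a kernel of some morphism. -/
def IsKernelMor {A B : C} (f : A ⟶ B) : Prop :=
  ∃ (Z : C) (g : B ⟶ Z) (w : f ≫ g = 0), Nonempty (IsLimit (KernelFork.ofι f w))

/-- `f` is a cokernel of some morphism. -/
def IsCokernelMor {A B : C} (f : A ⟶ B) : Prop :=
  ∃ (Z : C) (g : Z ⟶ A) (w : g ≫ f = 0), Nonempty (IsColimit (CokernelCofork.ofπ f w))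

/-- A quasi-abelian category: pre-abelian, kernels are stable under pushout and
cokernels are stable under pullback. -/
def IsQuasiAbelian (C : Type u) [Category.{v} C] [Preadditive C] : Prop :=
  HasKernels C ∧ HasCokernels C ∧
  (∀ ⦃A B Z : C⦄ (f : A ⟶ B) (t : A ⟶ Z), IsKernelMor f →
    ∀ ⦃P : C⦄ (s : B ⟶ P) (s' : Z ⟶ P) (w : f ≫ s = t ≫ s'),
      IsColimit (PushoutCocone.mk s s' w) → IsKernelMor s') ∧
  (∀ ⦃A B Z : C⦄ (f : B ⟶ A) (t : Z ⟶ A), IsCokernelMor f →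
    ∀ ⦃P : C⦄ (s : P ⟶ B) (s' : P ⟶ Z) (w : s ≫ f = s' ≫ t),
      IsLimit (PullbackCone.mk s s' w) → IsCokernelMor s')

/-- An `E`-composition series of length `n` for `X`. -/
structure CompSeries (Ex : ExactStructure C) (X : C) (n : ℕ) where
  obj : Fin (n + 1) → C
  map : ∀ i : Fin n, obj i.castSucc ⟶ obj i.succ
  zero : IsZero (obj 0)
  top : obj (Fin.last n) ≅ X
  adm : ∀ i : Fin n, Ex.AdmMono (map i)
  simpleFactor : ∀ i : Fin n,
    ∃ (Q : C) (d : obj i.succ ⟶ Q), Ex.E (map i) d ∧ Ex.ESimple Q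

/-- Two composition series are equivalent: there is a bijection of indices matching
isomorphic composition factors. -/
def CompSeries.EquivSeries {Ex : ExactStructure C} {X : C} {n m : ℕ}
    (s : CompSeries Ex X n) (t : CompSeries Ex X m) : Prop :=
  ∃ σ : Fin n ≃ Fin m, ∀ (i : Fin n) ⦃Q Q' : C⦄
    (d : s.obj i.succ ⟶ Q) (d' : t.obj (σ i).succ ⟶ Q'),
    Ex.E (s.map i) d → Ex.E (t.map (σ i)) d' → Nonempty (Q ≅ Q')

/-- The Jordan-Hölder property for an exact structure. -/
def JordanHolder (Ex : ExactStructure C) : Prop :=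
  ∀ (X : C) (n m : ℕ) (s : CompSeries Ex X n) (t : CompSeries Ex X m),
    n = m ∧ s.EquivSeries t

/-- A maximal `E`-subobject: one with `E`-simple cokernel. -/
def ESub.IsMax {Ex : ExactStructure C} {X : C} (A : ESub Ex X) : Prop :=
  ∃ (Q : C) (d : X ⟶ Q), Ex.E A.ι d ∧ Ex.ESimple Q

/-- `Y` belongs to the generalized intersection `Int_X(A, B)`: it is a maximal common
`E`-subobject of `A` and `B`. -/
def InInt {Ex : ExactStructure C} {X : C} (A B Y : ESub Ex X) : Prop :=
  ESubLe Ex Y A ∧ ESubLe Ex Y B ∧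
  ∀ Z : ESub Ex X, ESubLe Ex Z A → ESubLe Ex Z B → ESubLe Ex Y Z → ESubLe Ex Z Y

/-- A diamond exact category. -/
def DiamondCat (Ex : ExactStructure C) : Prop :=
  ∀ (X : C) (A B : ESub Ex X), A.IsMax → B.IsMax → ¬ ESubEquiv Ex A B →
    ∀ Y : ESub Ex X, InInt A B Y →
      (∀ (h : Y.obj ⟶ A.obj), Ex.AdmMono h → h ≫ A.ι = Y.ι →
        ∀ ⦃Q : C⦄ (d : A.obj ⟶ Q), Ex.E h d → Ex.ESimple Q) ∧
      (∀ (h : Y.obj ⟶ B.obj), Ex.AdmMono h → h ≫ B.ι = Y.ι →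
        ∀ ⦃Q : C⦄ (d : B.obj ⟶ Q), Ex.E h d → Ex.ESimple Q) ∧
      (∀ (hA : Y.obj ⟶ A.obj) (hB : Y.obj ⟶ B.obj), Ex.AdmMono hA → Ex.AdmMono hB →
        hA ≫ A.ι = Y.ι → hB ≫ B.ι = Y.ι →
        ∀ ⦃QXA QAY QXB QBY : C⦄
          (dXA : X ⟶ QXA) (dAY : A.obj ⟶ QAY) (dXB : X ⟶ QXB) (dBY : B.obj ⟶ QBY),
          Ex.E A.ι dXA → Ex.E hA dAY → Ex.E B.ι dXB → Ex.E hB dBY →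
          (Nonempty (QXA ≅ QXB) ∧ Nonempty (QAY ≅ QBY)) ∨
          (Nonempty (QXA ≅ QBY) ∧ Nonempty (QAY ≅ QXB)))

namespace ExactStructure

section Aux

variable {C : Type u} [Category.{v} C] [Preadditive C]
variable (Ex : ExactStructure C)

section Transport

variable {Ex}

lemma E.mono {A B X : C} {i : A ⟶ B} {d : B ⟶ X} (h : Ex.E i d) : Mono i := by
  obtain ⟨hk⟩ := (Ex.pair h).isKernel
  simpa using mono_of_isLimit_fork hk

lemma E.epi {A B X : C} {i : A ⟶ B} {d : B ⟶ X} (h : Ex.E i d) : Epi d := by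
  obtain ⟨hc⟩ := (Ex.pair h).isCokernel
  simpa using epi_of_isColimit_cofork hc

lemma E.precomp_iso {A' A B X : C} (e : A' ≅ A) {i : A ⟶ B} {d : B ⟶ X} (h : Ex.E i d) :
    Ex.E (e.hom ≫ i) d :=
  Ex.iso_closed e.symm (Iso.refl B) (Iso.refl X) h (by simp) (by simp)

lemma E.postcomp_iso {A B X X' : C} (e : X ≅ X') {i : A ⟶ B} {d : B ⟶ X} (h : Ex.E i d) :
    Ex.E i (d ≫ e.hom) :=
  Ex.iso_closed (Iso.refl A) (Iso.refl B) e h (by simp) (by simp)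

lemma E.mid_iso {A B B' X : C} (e : B ≅ B') {i : A ⟶ B} {d : B ⟶ X} (h : Ex.E i d) :
    Ex.E (i ≫ e.hom) (e.inv ≫ d) :=
  Ex.iso_closed (Iso.refl A) e (Iso.refl X) h (by simp) (by simp)

end Transport

lemma admMono_postcomp_iso {A B B' : C} {m : A ⟶ B} (h : Ex.AdmMono m) (e : B ≅ B') :
    Ex.AdmMono (m ≫ e.hom) := by
  obtain ⟨X, d, hd⟩ := h
  exact ⟨X, e.inv ≫ d, hd.mid_iso e⟩

lemma admMono_precomp_iso {A' A B : C} {m : A ⟶ B} (h : Ex.AdmMono m) (e : A' ≅ A) :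
    Ex.AdmMono (e.hom ≫ m) := by
  obtain ⟨X, d, hd⟩ := h
  exact ⟨X, d, hd.precomp_iso e⟩

lemma admEpi_precomp_iso {B' B X : C} {d : B ⟶ X} (h : Ex.AdmEpi d) (e : B' ≅ B) :
    Ex.AdmEpi (e.hom ≫ d) := by
  obtain ⟨A, i, hi⟩ := h
  exact ⟨A, i ≫ e.symm.hom, by simpa using hi.mid_iso e.symm⟩

lemma admEpi_postcomp_iso {B X X' : C} {d : B ⟶ X} (h : Ex.AdmEpi d) (e : X ≅ X') :
    Ex.AdmEpi (d ≫ e.hom) := by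
  obtain ⟨A, i, hi⟩ := h
  exact ⟨A, i, hi.postcomp_iso e⟩

lemma exists_E_id_zero (A : C) :
    ∃ (X₀ : C) (d : A ⟶ X₀), Ex.E (𝟙 A) d ∧ IsZero X₀ := by
  obtain ⟨X₀, d, hd⟩ := Ex.admMono_id A
  have w : 𝟙 A ≫ d = 0 := (Ex.pair hd).w
  have hd0 : d = 0 := by simpa using w
  have he : Epi d := hd.epi
  have hz : IsZero X₀ := by
    rw [IsZero.iff_id_eq_zero]
    rw [← cancel_epi d]
    simp [hd0]
  exact ⟨X₀, d, hd, hz⟩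

lemma exists_E_zero_id (A : C) :
    ∃ (W₀ : C) (i : W₀ ⟶ A), Ex.E i (𝟙 A) ∧ IsZero W₀ := by
  obtain ⟨W₀, i, hi⟩ := Ex.admEpi_id A
  have w : i ≫ 𝟙 A = 0 := (Ex.pair hi).w
  have hi0 : i = 0 := by simpa using w
  have hm : Mono i := hi.mono
  have hz : IsZero W₀ := by
    rw [IsZero.iff_id_eq_zero]
    rw [← cancel_mono i]
    simp [hi0]
  exact ⟨W₀, i, hi, hz⟩

end Aux

end ExactStructure
namespace ExactStructure

section Aux2
set_option linter.unusedSectionVars false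

variable {C : Type u} [Category.{v} C] [Preadditive C] [HasZeroObject C] [HasBinaryBiproducts C]
variable (Ex : ExactStructure C)

lemma admEpi_snd (U V : C) : Ex.AdmEpi (biprod.snd : U ⊞ V ⟶ V) := by
  obtain ⟨X₀, d, hEd, hz⟩ := Ex.exists_E_id_zero U
  obtain ⟨A, fm, k, w, ⟨hl⟩, Wi, i, hEik⟩ :=
    Ex.pullback_admEpi d (0 : V ⟶ X₀) ⟨U, 𝟙 U, hEd⟩
  have wb : (biprod.fst : U ⊞ V ⟶ U) ≫ d = biprod.snd ≫ (0 : V ⟶ X₀) := hz.eq_of_tgt _ _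
  have hl2 : IsLimit (PullbackCone.mk biprod.fst biprod.snd wb) :=
    PullbackCone.IsLimit.mk wb (fun s => biprod.lift s.fst s.snd) (fun s => by simp)
      (fun s => by simp) (fun s m h1 h2 => by apply biprod.hom_ext <;> simpa)
  have hk : (hl.conePointUniqueUpToIso hl2).hom ≫ biprod.snd = k := by
    simpa using hl.conePointUniqueUpToIso_hom_comp hl2 WalkingCospan.right
  exact ⟨Wi, i ≫ (hl.conePointUniqueUpToIso hl2).hom,
    Ex.iso_closed (Iso.refl Wi) (hl.conePointUniqueUpToIso hl2) (Iso.refl V) hEik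
      (by simp; rfl) (by exact (Category.comp_id k).trans hk.symm)⟩

lemma admEpi_fst (U V : C) : Ex.AdmEpi (biprod.fst : U ⊞ V ⟶ U) := by
  have h := Ex.admEpi_precomp_iso (Ex.admEpi_snd V U) (biprod.braiding U V)
  have e : (biprod.braiding U V).hom ≫ (biprod.snd : V ⊞ U ⟶ U) = biprod.fst := by
    apply biprod.hom_ext' <;> simp [biprod.braiding]
  rwa [e] at h

lemma admMono_inr (U V : C) : Ex.AdmMono (biprod.inr : V ⟶ U ⊞ V) := by
  obtain ⟨W₀, i, hEi, hz⟩ := Ex.exists_E_zero_id U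
  obtain ⟨D, g, j, w, ⟨hc⟩, X, dd, hEj⟩ :=
    Ex.pushout_admMono i (0 : W₀ ⟶ V) ⟨U, 𝟙 U, hEi⟩
  have wb : i ≫ (biprod.inl : U ⟶ U ⊞ V) = (0 : W₀ ⟶ V) ≫ biprod.inr := hz.eq_of_src _ _
  have hc2 : IsColimit (PushoutCocone.mk biprod.inl biprod.inr wb) :=
    PushoutCocone.IsColimit.mk wb (fun s => biprod.desc s.inl s.inr) (fun s => by simp)
      (fun s => by simp) (fun s m h1 h2 => by apply biprod.hom_ext' <;> simpa)
  have hj : j ≫ (hc.coconePointUniqueUpToIso hc2).hom = biprod.inr := by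
    exact hc.comp_coconePointUniqueUpToIso_hom hc2 WalkingSpan.right
  exact ⟨X, (hc.coconePointUniqueUpToIso hc2).inv ≫ dd,
    Ex.iso_closed (Iso.refl V) (hc.coconePointUniqueUpToIso hc2) (Iso.refl X) hEj
      (by simp; exact hj) (by
        exact (Category.comp_id dd).trans (Iso.hom_inv_id_assoc _ dd).symm)⟩

lemma admMono_inl (U V : C) : Ex.AdmMono (biprod.inl : U ⟶ U ⊞ V) := by
  have h := Ex.admMono_postcomp_iso (Ex.admMono_inr V U) (biprod.braiding V U)
  have e : (biprod.inr : U ⟶ V ⊞ U) ≫ (biprod.braiding V U).hom = biprod.inl := by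
    apply biprod.hom_ext <;> simp [biprod.braiding]
  rwa [e] at h

end Aux2

end ExactStructure
namespace ExactStructure

section Aux3
set_option linter.unusedSectionVars false

variable {C : Type u} [Category.{v} C] [Preadditive C] [HasZeroObject C] [HasBinaryBiproducts C]
variable (Ex : ExactStructure C)

lemma admissible_of_admEpi {B X : C} {d : B ⟶ X} (h : Ex.AdmEpi d) : Ex.Admissible d :=
  ⟨X, d, 𝟙 X, h, Ex.admMono_id X, Category.comp_id d⟩

lemma admissible_of_admMono {A B : C} {m : A ⟶ B} (h : Ex.AdmMono m) : Ex.Admissible m :=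
  ⟨A, 𝟙 A, m, Ex.admEpi_id A, h, Category.id_comp m⟩

/-- The isomorphism given by `-𝟙`. -/
noncomputable def negIso (B : C) : B ≅ B where
  hom := -𝟙 B
  inv := -𝟙 B
  hom_inv_id := by simp
  inv_hom_id := by simp

lemma admissible_neg {A B : C} {f : A ⟶ B} (h : Ex.Admissible f) : Ex.Admissible (-f) := by
  obtain ⟨Z, e, m, he, hm, hc⟩ := h
  refine ⟨Z, e, m ≫ (negIso B).hom, he, Ex.admMono_postcomp_iso hm (negIso B), ?_⟩
  rw [← Category.assoc, hc]
  simp [negIso]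

variable {Ex}
variable (hadd : ∀ ⦃X Y : C⦄ (f g : X ⟶ Y),
    Ex.Admissible f → Ex.Admissible g → Ex.Admissible (f + g))

section Shear

variable {U V : C} (φ : U ⟶ V)

/-- The shear automorphism `𝟙 + fst ≫ φ ≫ inr` of `U ⊞ V`. -/
noncomputable def shear : U ⊞ V ≅ U ⊞ V where
  hom := 𝟙 _ + biprod.fst ≫ φ ≫ biprod.inr
  inv := 𝟙 _ - biprod.fst ≫ φ ≫ biprod.inr
  hom_inv_id := by
    simp only [Preadditive.comp_sub, Preadditive.add_comp, Category.comp_id, Category.id_comp,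
      Category.assoc]
    simp [Preadditive.sub_comp]
  inv_hom_id := by
    simp only [Preadditive.comp_add, Preadditive.sub_comp, Category.comp_id, Category.id_comp,
      Category.assoc]
    simp [Preadditive.comp_sub]

lemma shear_hom_snd : (shear φ).hom ≫ biprod.snd = biprod.snd + biprod.fst ≫ φ := by
  simp [shear]

lemma inl_shear_hom : biprod.inl ≫ (shear φ).hom = biprod.inl + φ ≫ biprod.inr := by
  simp [shear]

include hadd

lemma admissible_fst_comp : Ex.Admissible ((biprod.fst : U ⊞ V ⟶ U) ≫ φ) := by
  have h1 : Ex.Admissible ((shear φ).hom ≫ biprod.snd) :=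
    Ex.admissible_of_admEpi (Ex.admEpi_precomp_iso (Ex.admEpi_snd U V) (shear φ))
  have h2 : Ex.Admissible (-(biprod.snd : U ⊞ V ⟶ V)) :=
    Ex.admissible_neg (Ex.admissible_of_admEpi (Ex.admEpi_snd U V))
  have := hadd _ _ h1 h2
  rwa [shear_hom_snd, add_comm, ← add_assoc, neg_add_cancel, zero_add] at this

lemma admissible_comp_inr : Ex.Admissible (φ ≫ biprod.inr : U ⟶ U ⊞ V) := by
  have h1 : Ex.Admissible (biprod.inl ≫ (shear φ).hom) :=
    Ex.admissible_of_admMono (Ex.admMono_postcomp_iso (Ex.admMono_inl U V) (shear φ))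
  have h2 : Ex.Admissible (-(biprod.inl : U ⟶ U ⊞ V)) :=
    Ex.admissible_neg (Ex.admissible_of_admMono (Ex.admMono_inl U V))
  have := hadd _ _ h1 h2
  rwa [inl_shear_hom, add_comm, ← add_assoc, neg_add_cancel, zero_add] at this

end Shear

end Aux3

end ExactStructure
namespace ExactStructure

section Aux4
set_option linter.unusedSectionVars false

variable {C : Type u} [Category.{v} C] [Preadditive C] [HasZeroObject C] [HasBinaryBiproducts C]
variable {Ex : ExactStructure C}
variable (hadd : ∀ ⦃X Y : C⦄ (f g : X ⟶ Y),
    Ex.Admissible f → Ex.Admissible g → Ex.Admissible (f + g))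

include hadd

/-- Construction B: coimage-style data for `φ`. -/
lemma conB {U V : C} (φ : U ⟶ V) :
    ∃ (Z Q W : C) (d : U ⟶ Z) (m : Z ⟶ V) (q : V ⟶ Q) (i : W ⟶ U ⊞ V),
      Ex.E m q ∧ Ex.E i (biprod.fst ≫ d) ∧ d ≫ m = φ ∧ Epi d := by
  obtain ⟨Z, e₁, m₁, ⟨W, i₁, hEe⟩, ⟨Q, q₁, hEm⟩, hcomp⟩ := admissible_fst_comp hadd φ
  have hm : Mono m₁ := hEm.mono
  have h0 : biprod.inr ≫ e₁ = 0 := by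
    rw [← cancel_mono m₁, Category.assoc, hcomp, zero_comp, ← Category.assoc]
    simp
  have hd1 : biprod.fst ≫ (biprod.inl ≫ e₁) = e₁ := by
    apply biprod.hom_ext' <;> simp [h0]
  have hphi : (biprod.inl ≫ e₁) ≫ m₁ = φ := by
    rw [Category.assoc, hcomp, ← Category.assoc]
    simp
  have hepi : Epi (biprod.inl ≫ e₁) := by
    haveI h1 : Epi (biprod.fst ≫ (biprod.inl ≫ e₁)) := by rw [hd1]; exact hEe.epi
    exact epi_of_epi (biprod.fst : U ⊞ V ⟶ U) (biprod.inl ≫ e₁)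
  refine ⟨Z, Q, W, biprod.inl ≫ e₁, m₁, q₁, i₁, hEm, ?_, hphi, hepi⟩
  rwa [hd1]

/-- Construction A: image-style data for `φ`. -/
lemma conA {U V : C} (φ : U ⟶ V) :
    ∃ (Z W : C) (d : U ⟶ Z) (m : Z ⟶ V) (i : W ⟶ U),
      Ex.E i d ∧ d ≫ m = φ ∧ Mono m := by
  obtain ⟨Z, d₂, m, ⟨W, i₂, hEd⟩, ⟨Q, q, hEm⟩, hcomp⟩ := admissible_comp_inr hadd φ
  have hd2 : Epi d₂ := hEd.epi
  have h0 : m ≫ biprod.fst = 0 := by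
    rw [← cancel_epi d₂, ← Category.assoc, hcomp, comp_zero, Category.assoc]
    simp
  have hm : m = (m ≫ biprod.snd) ≫ biprod.inr := by
    apply biprod.hom_ext <;> simp [h0]
  have hphi : d₂ ≫ (m ≫ biprod.snd) = φ := by
    have h1 : (d₂ ≫ m) ≫ biprod.snd = (φ ≫ biprod.inr) ≫ (biprod.snd : U ⊞ V ⟶ V) := by
      rw [hcomp]
    simpa using h1
  have hmono : Mono (m ≫ biprod.snd) := by
    haveI h1 : Mono ((m ≫ biprod.snd) ≫ biprod.inr) := by rw [← hm]; exact hEm.mono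
    exact mono_of_mono (m ≫ biprod.snd) (biprod.inr : V ⟶ U ⊞ V)
  exact ⟨Z, W, d₂, m ≫ biprod.snd, i₂, hEd, hphi, hmono⟩

/-- Bimorphisms are isomorphisms. -/
lemma isIso_of_mono_of_epi {P Q : C} (ψ : P ⟶ Q) (hm : Mono ψ) (he : Epi ψ) : IsIso ψ := by
  obtain ⟨Z, Qc, W, d, m, q, i, hEm, hEi, hcomp, hepi⟩ := conB hadd ψ
  -- `q = 0` since `ψ` is epi
  have hq0 : q = 0 := by
    rw [← cancel_epi ψ, comp_zero, ← hcomp, Category.assoc, (Ex.pair hEm).w, comp_zero]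
  -- `m` is iso
  obtain ⟨hk⟩ := (Ex.pair hEm).isKernel
  obtain ⟨l, hl⟩ := Fork.IsLimit.lift' hk (𝟙 Q) (by simp [hq0])
  have hlm : l ≫ m = 𝟙 Q := by simpa using hl
  have hmiso : IsIso m := by
    have hmono : Mono m := hEm.mono
    refine ⟨l, ?_, hlm⟩
    rw [← cancel_mono m, Category.assoc, hlm]
    simp
  -- `E i (fst ≫ ψ)`
  have hEψ : Ex.E i (biprod.fst ≫ ψ) := by
    have := hEi.postcomp_iso (asIso m)
    rwa [asIso_hom, Category.assoc, hcomp] at this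
  -- `inr` is a kernel of `fst ≫ ψ`
  have w2 : (biprod.inr : Q ⟶ P ⊞ Q) ≫ biprod.fst ≫ ψ = 0 := by
    rw [← Category.assoc]; simp
  have hk2 : IsLimit (KernelFork.ofι (biprod.inr : Q ⟶ P ⊞ Q) w2) := by
    refine Fork.IsLimit.mk _ (fun s => s.ι ≫ biprod.snd) (fun s => ?_) (fun s l' hl' => ?_)
    · have hc := s.condition
      have h1 : (s.ι ≫ biprod.fst) ≫ ψ = 0 ≫ ψ := by
        rw [Category.assoc]; simpa using hc
      have h2 : s.ι ≫ biprod.fst = 0 := by rwa [cancel_mono ψ] at h1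
      apply biprod.hom_ext <;> simp [h2]
    · have h1 := congrArg (· ≫ (biprod.snd : P ⊞ Q ⟶ Q)) hl'
      simpa using h1
  -- transport along kernel uniqueness
  obtain ⟨hkψ⟩ := (Ex.pair hEψ).isKernel
  have hθ : (hkψ.conePointUniqueUpToIso hk2).hom ≫ biprod.inr = i := by
    simpa using hkψ.conePointUniqueUpToIso_hom_comp hk2 WalkingParallelPair.zero
  have hEinr : Ex.E (biprod.inr : Q ⟶ P ⊞ Q) (biprod.fst ≫ ψ) :=
    Ex.iso_closed (hkψ.conePointUniqueUpToIso hk2) (Iso.refl _) (Iso.refl _) hEψ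
      (by simp only [Iso.refl_hom, Category.comp_id]; exact hθ.symm) (by simp)
  -- cokernel comparison
  obtain ⟨hcoψ⟩ := (Ex.pair hEinr).isCokernel
  have winr : (biprod.inr : Q ⟶ P ⊞ Q) ≫ biprod.fst = 0 := by simp
  have hco2 : IsColimit (CokernelCofork.ofπ (biprod.fst : P ⊞ Q ⟶ P) winr) := by
    refine Cofork.IsColimit.mk _ (fun s => biprod.inl ≫ s.π) (fun s => ?_) (fun s l' hl' => ?_)
    · have h0 : (biprod.inr : Q ⟶ P ⊞ Q) ≫ s.π = 0 := by simpa using s.condition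
      have key : (biprod.fst : P ⊞ Q ⟶ P) ≫ biprod.inl ≫ s.π = s.π := by
        apply biprod.hom_ext' <;> simp [h0]
      simpa using key
    · have h1 := congrArg ((biprod.inl : P ⟶ P ⊞ Q) ≫ ·) hl'
      simpa using h1
  have hε := hco2.comp_coconePointUniqueUpToIso_hom hcoψ WalkingParallelPair.one
  simp only [Cofork.app_one_eq_π, Cofork.π_ofπ] at hε
  have hψeq : ψ = (hco2.coconePointUniqueUpToIso hcoψ).hom := by
    rw [← cancel_epi (biprod.fst : P ⊞ Q ⟶ P)]
    exact hε.symm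
  rw [hψeq]
  infer_instance

/-- Every morphism factors as an admissible epic followed by an admissible monic,
with the `E`-data. -/
lemma factor_all {U V : C} (φ : U ⟶ V) :
    ∃ (Z W Q : C) (e : U ⟶ Z) (m : Z ⟶ V) (i : W ⟶ U) (q : V ⟶ Q),
      Ex.E i e ∧ Ex.E m q ∧ e ≫ m = φ := by
  obtain ⟨Z₂, W₂, d₂, m₂, i₂, hEd₂, hA, hmono₂⟩ := conA hadd φ
  obtain ⟨Z₁, Q₁, W₁, d₁, m₁, q₁, i₁, hEm₁, hEi₁, hB, hepi₁⟩ := conB hadd φ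
  have hd₂epi : Epi d₂ := hEd₂.epi
  have h1 : m₂ ≫ q₁ = 0 := by
    rw [← cancel_epi d₂, ← Category.assoc, hA, comp_zero, ← hB, Category.assoc,
      (Ex.pair hEm₁).w, comp_zero]
  obtain ⟨hkm₁⟩ := (Ex.pair hEm₁).isKernel
  obtain ⟨u, hu'⟩ := Fork.IsLimit.lift' hkm₁ m₂ (by simp [h1])
  have hu : u ≫ m₁ = m₂ := by simpa using hu'
  haveI : Mono m₁ := hEm₁.mono
  have hu2 : d₂ ≫ u = d₁ := by
    rw [← cancel_mono m₁, Category.assoc, hu, hA, ← hB]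
  have humono : Mono u := by
    have : Mono (u ≫ m₁) := by rw [hu]; exact hmono₂
    exact mono_of_mono u m₁
  have huepi : Epi u := by
    have : Epi (d₂ ≫ u) := by rw [hu2]; exact hepi₁
    exact epi_of_epi d₂ u
  have huiso : IsIso u := isIso_of_mono_of_epi hadd u humono huepi
  refine ⟨Z₁, W₂, Q₁, d₂ ≫ u, m₁, i₂, q₁, ?_, hEm₁, by rw [Category.assoc, hu, hA]⟩
  exact hEd₂.postcomp_iso (asIso u)

end Aux4

end ExactStructure
namespace ExactStructure

section Aux5
set_option linter.unusedSectionVars false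

variable {C : Type u} [Category.{v} C] [Preadditive C] [HasZeroObject C] [HasBinaryBiproducts C]
variable {Ex : ExactStructure C}

noncomputable def isLimit_ker {U V Z W : C} {e : U ⟶ Z} {m : Z ⟶ V} {i : W ⟶ U} {φ : U ⟶ V}
    (hE : Ex.E i e) (hm : Mono m) (hc : e ≫ m = φ) (w : i ≫ φ = 0) :
    IsLimit (KernelFork.ofι i w) := by
  have hk := (Ex.pair hE).isKernel.some
  refine Fork.IsLimit.mk _
    (fun s => Fork.IsLimit.lift hk s.ι ?_) (fun s => Fork.IsLimit.lift_ι' hk s.ι _)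
    (fun s l hl => ?_)
  · have h1 : s.ι ≫ φ = 0 := by simpa using s.condition
    have h2 : (s.ι ≫ e) ≫ m = 0 ≫ m := by
      rw [Category.assoc, hc, h1, zero_comp]
    rw [(cancel_mono m).mp h2]
    simp
  · apply Fork.IsLimit.hom_ext hk
    rw [Fork.IsLimit.lift_ι' hk]
    exact hl

noncomputable def isColimit_coker {U V Z Q : C} {e : U ⟶ Z} {m : Z ⟶ V} {q : V ⟶ Q} {φ : U ⟶ V}
    (hE : Ex.E m q) (he : Epi e) (hc : e ≫ m = φ) (w : φ ≫ q = 0) :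
    IsColimit (CokernelCofork.ofπ q w) := by
  have hco := (Ex.pair hE).isCokernel.some
  refine Cofork.IsColimit.mk _
    (fun s => Cofork.IsColimit.desc hco s.π ?_) (fun s => Cofork.IsColimit.π_desc' hco s.π _)
    (fun s l hl => ?_)
  · have h1 : φ ≫ s.π = 0 := by simpa using s.condition
    have h2 : e ≫ (m ≫ s.π) = e ≫ 0 := by
      rw [← Category.assoc, hc, h1, comp_zero]
    rw [(cancel_epi e).mp h2]
    simp
  · apply Cofork.IsColimit.hom_ext hco
    rw [Cofork.IsColimit.π_desc' hco]
    exact hl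

variable (hadd : ∀ ⦃X Y : C⦄ (f g : X ⟶ Y),
    Ex.Admissible f → Ex.Admissible g → Ex.Admissible (f + g))

include hadd

lemma E_of_mono {U V : C} (f : U ⟶ V) (hf : Mono f) : ∃ (Q : C) (q : V ⟶ Q), Ex.E f q := by
  obtain ⟨Z, W, Q, e, m, i, q, hEi, hEm, hc⟩ := factor_all hadd f
  have h1 : i ≫ f = 0 := by rw [← hc, ← Category.assoc, (Ex.pair hEi).w, zero_comp]
  have hi0 : i = 0 := (cancel_mono f).mp (by rw [h1, zero_comp])
  obtain ⟨hco⟩ := (Ex.pair hEi).isCokernel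
  obtain ⟨r, hr⟩ := Cofork.IsColimit.desc' hco (𝟙 U) (by simp [hi0])
  have hr' : e ≫ r = 𝟙 U := by simpa using hr
  have he : Epi e := hEi.epi
  have heiso : IsIso e := by
    refine ⟨r, hr', ?_⟩
    rw [← cancel_epi e, ← Category.assoc, hr']
    simp
  have h2 := hEm.precomp_iso (asIso e)
  rw [asIso_hom, hc] at h2
  exact ⟨Q, q, h2⟩

lemma E_of_epi {U V : C} (f : U ⟶ V) (hf : Epi f) : ∃ (W : C) (i : W ⟶ U), Ex.E i f := by
  obtain ⟨Z, W, Q, e, m, i, q, hEi, hEm, hc⟩ := factor_all hadd f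
  have h1 : f ≫ q = 0 := by rw [← hc, Category.assoc, (Ex.pair hEm).w, comp_zero]
  have hq0 : q = 0 := (cancel_epi f).mp (by rw [h1, comp_zero])
  obtain ⟨hk⟩ := (Ex.pair hEm).isKernel
  obtain ⟨l, hl⟩ := Fork.IsLimit.lift' hk (𝟙 V) (by simp [hq0])
  have hl' : l ≫ m = 𝟙 V := by simpa using hl
  have hmm : Mono m := hEm.mono
  have hmiso : IsIso m := by
    refine ⟨l, ?_, hl'⟩
    rw [← cancel_mono m, Category.assoc, hl']
    simp
  have h2 := hEi.postcomp_iso (asIso m)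
  rw [asIso_hom, hc] at h2
  exact ⟨W, i, h2⟩

end Aux5

end ExactStructure
/-- If admissible morphisms are closed under addition, then the category is abelian and
the exact structure is the class of all kernel-cokernel pairs. -/
theorem stmt2 [HasZeroObject C] [HasBinaryBiproducts C] (Ex : ExactStructure C)
    (h : ∀ ⦃X Y : C⦄ (f g : X ⟶ Y),
      Ex.Admissible f → Ex.Admissible g → Ex.Admissible (f + g)) :
    IsAbelianCat C ∧ Ex.IsMaximalAll := by
  have hker : HasKernels C := by
    refine ⟨fun {X Y} f => ?_⟩
    obtain ⟨Z, W, Q, e, m, i, q, hEi, hEm, hc⟩ := ExactStructure.factor_all h f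
    have hw : i ≫ f = 0 := by rw [← hc, ← Category.assoc, (Ex.pair hEi).w, zero_comp]
    exact HasLimit.mk ⟨KernelFork.ofι i hw, ExactStructure.isLimit_ker hEi hEm.mono hc hw⟩
  have hcoker : HasCokernels C := by
    refine ⟨fun {X Y} f => ?_⟩
    obtain ⟨Z, W, Q, e, m, i, q, hEi, hEm, hc⟩ := ExactStructure.factor_all h f
    have hw : f ≫ q = 0 := by rw [← hc, Category.assoc, (Ex.pair hEm).w, comp_zero]
    exact HasColimit.mk ⟨CokernelCofork.ofπ q hw,
      ExactStructure.isColimit_coker hEm hEi.epi hc hw⟩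
  refine ⟨⟨?_, hker, hcoker, ?_, ?_⟩, ?_⟩
  · exact hasFiniteProducts_of_has_binary_and_terminal
  · intro X Y f hf
    obtain ⟨Q, q, hEq⟩ := ExactStructure.E_of_mono h f hf
    exact ⟨⟨Q, q, (Ex.pair hEq).w, (Ex.pair hEq).isKernel.some⟩⟩
  · intro X Y f hf
    obtain ⟨W, i, hEi⟩ := ExactStructure.E_of_epi h f hf
    exact ⟨⟨W, i, (Ex.pair hEi).w, (Ex.pair hEi).isCokernel.some⟩⟩
  · intro A B X i d hpair
    have hmono : Mono i := by
      obtain ⟨hk⟩ := hpair.isKernel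
      simpa using mono_of_isLimit_fork hk
    obtain ⟨Q, q, hEq⟩ := ExactStructure.E_of_mono h i hmono
    obtain ⟨hcq⟩ := (Ex.pair hEq).isCokernel
    obtain ⟨hcd⟩ := hpair.isCokernel
    have hε := hcq.comp_coconePointUniqueUpToIso_hom hcd WalkingParallelPair.one
    simp only [Cofork.app_one_eq_π, Cofork.π_ofπ] at hε
    exact Ex.iso_closed (Iso.refl A) (Iso.refl B) (hcq.coconePointUniqueUpToIso hcd) hEq
      (by simp) (by simpa using hε)
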